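/- Let X₁, X₂ and V be complex Hilbert spaces and let j : X₁ → X₂ be an injective bounded linear map; let ι := j × id_V : X₁ × V → X₂ × V. Let B be a closed subspace of the product Hilbert space X₁ × V such that ι(B) is closed in X₂ × V. Then (X₁ × {0}, B) is a Fredholm pair in X₁ × V if and only if (X₂ × {0}, ι(B)) is a Fredholm pair in X₂ × V, and in that case ind(X₁ × {0}, B) = ind(X₂ × {0}, ι(B)). -/

import Mathlib

open Module

/-- A pair `(X, Y)` of closed subspaces of a complex Hilbert (or normed) space `H`
is a *Fredholm pair* if `X ∩ Y` is finite-dimensional, `X + Y` is closed, and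
`H / (X + Y)` is finite-dimensional. -/
def IsFredholmPair {H : Type*} [NormedAddCommGroup H] [NormedSpace ℂ H]
    (X Y : Submodule ℂ H) : Prop :=
  FiniteDimensional ℂ ↥(X ⊓ Y) ∧ IsClosed ((X ⊔ Y : Submodule ℂ H) : Set H) ∧
    FiniteDimensional ℂ (H ⧸ (X ⊔ Y))

/-- The index of a Fredholm pair: `dim (X ∩ Y) - dim (H / (X + Y))`. -/
noncomputable def fpIndex {H : Type*} [NormedAddCommGroup H] [NormedSpace ℂ H]
    (X Y : Submodule ℂ H) : ℤ :=
  (finrank ℂ ↥(X ⊓ Y) : ℤ) - (finrank ℂ (H ⧸ (X ⊔ Y)) : ℤ)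

lemma aux_closed_prod_iff {X V : Type*} [NormedAddCommGroup X] [NormedSpace ℂ X]
    [NormedAddCommGroup V] [NormedSpace ℂ V] (Q : Submodule ℂ V) :
    IsClosed (((⊤ : Submodule ℂ X).prod Q : Submodule ℂ (X × V)) : Set (X × V)) ↔
      IsClosed (Q : Set V) := by
  constructor
  · intro h
    have h2 := h.preimage (Continuous.prodMk_right (0 : X))
    convert h2 using 1
    ext v; simp
  · intro h
    have : (((⊤ : Submodule ℂ X).prod Q : Submodule ℂ (X × V)) : Set (X × V))
        = Set.univ ×ˢ (Q : Set V) := by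
      ext ⟨x, v⟩; simp
    rw [this]
    exact isClosed_univ.prod h

noncomputable def auxQuotEquiv {X V : Type*} [AddCommGroup X] [Module ℂ X] [AddCommGroup V]
    [Module ℂ V] (Q : Submodule ℂ V) :
    ((X × V) ⧸ ((⊤ : Submodule ℂ X).prod Q)) ≃ₗ[ℂ] V ⧸ Q := by
  have hker : LinearMap.ker (Q.mkQ.comp (LinearMap.snd ℂ X V)) = (⊤ : Submodule ℂ X).prod Q := by
    ext ⟨x, v⟩
    simp [LinearMap.mem_ker, Submodule.Quotient.mk_eq_zero, Submodule.mem_prod]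
  have hsurj : Function.Surjective (Q.mkQ.comp (LinearMap.snd ℂ X V)) := by
    intro y
    obtain ⟨v, rfl⟩ := Q.mkQ_surjective y
    exact ⟨(0, v), rfl⟩
  exact (Submodule.quotEquivOfEq _ _ hker.symm).trans
    ((Q.mkQ.comp (LinearMap.snd ℂ X V)).quotKerEquivOfSurjective hsurj)

theorem stmt11 {X₁ X₂ V : Type*}
    [NormedAddCommGroup X₁] [InnerProductSpace ℂ X₁] [CompleteSpace X₁]
    [NormedAddCommGroup X₂] [InnerProductSpace ℂ X₂] [CompleteSpace X₂]
    [NormedAddCommGroup V] [InnerProductSpace ℂ V] [CompleteSpace V]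
    (j : X₁ →L[ℂ] X₂) (hj : Function.Injective j)
    (ι : X₁ × V →L[ℂ] X₂ × V) (hι : ι = j.prodMap (ContinuousLinearMap.id ℂ V))
    (B : Submodule ℂ (X₁ × V)) (hBc : IsClosed (B : Set (X₁ × V)))
    (hιB : IsClosed ((B.map (ι : X₁ × V →ₗ[ℂ] X₂ × V) : Submodule ℂ (X₂ × V)) : Set (X₂ × V))) :
    (IsFredholmPair ((⊤ : Submodule ℂ X₁).prod (⊥ : Submodule ℂ V)) B ↔
      IsFredholmPair ((⊤ : Submodule ℂ X₂).prod (⊥ : Submodule ℂ V)) (B.map (ι : X₁ × V →ₗ[ℂ] X₂ × V))) ∧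
    (IsFredholmPair ((⊤ : Submodule ℂ X₁).prod (⊥ : Submodule ℂ V)) B →
      fpIndex ((⊤ : Submodule ℂ X₁).prod (⊥ : Submodule ℂ V)) B =
        fpIndex ((⊤ : Submodule ℂ X₂).prod (⊥ : Submodule ℂ V)) (B.map (ι : X₁ × V →ₗ[ℂ] X₂ × V))) := by
  have hιapp : ∀ p : X₁ × V, ι p = (j p.1, p.2) := by
    intro p; rw [hι]; rfl
  have hιinj : Function.Injective ι := by
    intro a b h
    rw [hιapp, hιapp, Prod.ext_iff] at h
    exact Prod.ext (hj h.1) h.2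
  set Q : Submodule ℂ V := B.map (LinearMap.snd ℂ X₁ V) with hQ
  -- sup on the X₁ side
  have hsup1 : (⊤ : Submodule ℂ X₁).prod (⊥ : Submodule ℂ V) ⊔ B
      = (⊤ : Submodule ℂ X₁).prod Q := by
    apply le_antisymm
    · refine sup_le (Submodule.prod_mono le_rfl bot_le) ?_
      rintro ⟨x, v⟩ hb
      exact ⟨trivial, ⟨(x, v), hb, rfl⟩⟩
    · rintro ⟨x, v⟩ ⟨-, hv⟩
      obtain ⟨⟨x', v'⟩, hb, hv'⟩ := hv
      have h0 : ((x - x', 0) : X₁ × V) + (x', v') = (x, v) := by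
        simp only [LinearMap.snd_apply] at hv'
        subst hv'
        ext <;> simp
      rw [← h0]
      exact Submodule.add_mem _ (Submodule.mem_sup_left ⟨trivial, rfl⟩)
        (Submodule.mem_sup_right hb)
  -- sup on the X₂ side
  have hsup2 : (⊤ : Submodule ℂ X₂).prod (⊥ : Submodule ℂ V) ⊔ B.map (ι : X₁ × V →ₗ[ℂ] X₂ × V)
      = (⊤ : Submodule ℂ X₂).prod Q := by
    apply le_antisymm
    · refine sup_le (Submodule.prod_mono le_rfl bot_le) ?_
      rintro ⟨x, v⟩ hb
      obtain ⟨⟨x₁, v₁⟩, hb₁, hv₁⟩ := hb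
      rw [ContinuousLinearMap.coe_coe, hιapp] at hv₁
      refine ⟨trivial, ⟨(x₁, v₁), hb₁, ?_⟩⟩
      simpa using congrArg Prod.snd hv₁
    · rintro ⟨x, v⟩ ⟨-, hv⟩
      obtain ⟨⟨x', v'⟩, hb, hv'⟩ := hv
      simp only [LinearMap.snd_apply] at hv'
      subst hv'
      have h0 : ((x - j x', 0) : X₂ × V) + ι (x', v') = (x, v') := by
        rw [hιapp]; ext <;> simp
      rw [← h0]
      exact Submodule.add_mem _ (Submodule.mem_sup_left ⟨trivial, rfl⟩)
        (Submodule.mem_sup_right ⟨(x', v'), hb, rfl⟩)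
  -- intersection
  have hinf : ((⊤ : Submodule ℂ X₁).prod (⊥ : Submodule ℂ V) ⊓ B).map (ι : X₁ × V →ₗ[ℂ] X₂ × V)
      = (⊤ : Submodule ℂ X₂).prod (⊥ : Submodule ℂ V) ⊓ B.map (ι : X₁ × V →ₗ[ℂ] X₂ × V) := by
    apply le_antisymm
    · rintro ⟨x, v⟩ hx
      obtain ⟨⟨x₁, v₁⟩, ⟨⟨-, hv₁⟩, hb⟩, hmap⟩ := hx
      rw [ContinuousLinearMap.coe_coe, hιapp] at hmap
      simp only [Submodule.mem_bot] at hv₁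
      obtain ⟨rfl, rfl⟩ := Prod.ext_iff.mp hmap
      exact ⟨⟨trivial, hv₁⟩, ⟨(x₁, v₁), hb, (hιapp _)⟩⟩
    · rintro ⟨x, v⟩ ⟨⟨-, hv⟩, hb⟩
      simp only [Submodule.mem_bot] at hv
      subst hv
      obtain ⟨⟨x₁, v₁⟩, hb₁, hmap⟩ := hb
      rw [ContinuousLinearMap.coe_coe, hιapp] at hmap
      obtain ⟨h1, h2⟩ := Prod.ext_iff.mp hmap
      refine ⟨(x₁, v₁), ⟨⟨trivial, ?_⟩, hb₁⟩, by rw [ContinuousLinearMap.coe_coe, hιapp]; exact hmap⟩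
      simpa using h2
  -- equivalences
  have einf : ↥((⊤ : Submodule ℂ X₁).prod (⊥ : Submodule ℂ V) ⊓ B) ≃ₗ[ℂ]
      ↥((⊤ : Submodule ℂ X₂).prod (⊥ : Submodule ℂ V) ⊓ B.map (ι : X₁ × V →ₗ[ℂ] X₂ × V)) :=
    (Submodule.equivMapOfInjective ι.toLinearMap hιinj _).trans
      (LinearEquiv.ofEq _ _ hinf)
  have equot1 : ((X₁ × V) ⧸ ((⊤ : Submodule ℂ X₁).prod (⊥ : Submodule ℂ V) ⊔ B)) ≃ₗ[ℂ]
      V ⧸ Q := (Submodule.quotEquivOfEq _ _ hsup1).trans (auxQuotEquiv Q)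
  have equot2 : ((X₂ × V) ⧸ ((⊤ : Submodule ℂ X₂).prod (⊥ : Submodule ℂ V) ⊔ B.map (ι : X₁ × V →ₗ[ℂ] X₂ × V))) ≃ₗ[ℂ]
      V ⧸ Q := (Submodule.quotEquivOfEq _ _ hsup2).trans (auxQuotEquiv Q)
  have equot : ((X₁ × V) ⧸ ((⊤ : Submodule ℂ X₁).prod (⊥ : Submodule ℂ V) ⊔ B)) ≃ₗ[ℂ]
      ((X₂ × V) ⧸ ((⊤ : Submodule ℂ X₂).prod (⊥ : Submodule ℂ V) ⊔ B.map (ι : X₁ × V →ₗ[ℂ] X₂ × V))) :=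
    equot1.trans equot2.symm
  have hclosediff : IsClosed ((((⊤ : Submodule ℂ X₁).prod (⊥ : Submodule ℂ V) ⊔ B) :
      Submodule ℂ (X₁ × V)) : Set (X₁ × V)) ↔
      IsClosed ((((⊤ : Submodule ℂ X₂).prod (⊥ : Submodule ℂ V) ⊔ B.map (ι : X₁ × V →ₗ[ℂ] X₂ × V)) :
      Submodule ℂ (X₂ × V)) : Set (X₂ × V)) := by
    rw [hsup1, hsup2, aux_closed_prod_iff, aux_closed_prod_iff]
  constructor
  · constructor
    · rintro ⟨h1, h2, h3⟩
      exact ⟨einf.finiteDimensional, hclosediff.mp h2, equot.finiteDimensional⟩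
    · rintro ⟨h1, h2, h3⟩
      exact ⟨einf.symm.finiteDimensional, hclosediff.mpr h2, equot.symm.finiteDimensional⟩
  · rintro ⟨h1, h2, h3⟩
    unfold fpIndex
    rw [einf.finrank_eq, equot.finrank_eq]
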